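/- Let d ≥ 2 and define for a ∈ (0,1): b(a) = (1−a^d)^{1/d} and K(a) = a^{d−1}/(1 + b(a)^{d−1}). Then the function T₁(a) = (a K(a))^d · K'(a)/K(a) is positive and strictly increasing on (0,1), and T₁(a) ∼ (d−1)/b(a) → ∞ as a → 1⁻. -/

import Mathlib

open Set Filter Topology

/-- `b(a) = (1 − a^d)^{1/d}`. -/
noncomputable def bfun (d : ℕ) (x : ℝ) : ℝ := (1 - x ^ d) ^ ((d : ℝ)⁻¹)

/-- `K(a) = a^{d−1} / (1 + b(a)^{d−1})`. -/
noncomputable def Kfun (d : ℕ) (x : ℝ) : ℝ := x ^ (d - 1) / (1 + bfun d x ^ (d - 1))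

/-- `K'(a) = (d−1)(b+1)K²/(a b a^{d−1})`. -/
noncomputable def Kderiv (d : ℕ) (x : ℝ) : ℝ :=
  (d - 1 : ℝ) * (bfun d x + 1) * (Kfun d x) ^ 2 / (x * bfun d x * x ^ (d - 1))

/-- `T₁(a) = (a K(a))^d · K'(a)/K(a)`. -/
noncomputable def T1 (d : ℕ) (x : ℝ) : ℝ := (x * Kfun d x) ^ d * Kderiv d x / Kfun d x

lemma bfun_pos {d : ℕ} (hd : 2 ≤ d) {x : ℝ} (hx : x ∈ Set.Ioo (0:ℝ) 1) :
    0 < bfun d x := by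
  have h1 : x ^ d < 1 := pow_lt_one₀ hx.1.le hx.2 (by omega)
  exact Real.rpow_pos_of_pos (by linarith) _

lemma bfun_lt_one {d : ℕ} (hd : 2 ≤ d) {x : ℝ} (hx : x ∈ Set.Ioo (0:ℝ) 1) :
    bfun d x < 1 := by
  have h0 : 0 < x ^ d := pow_pos hx.1 d
  have h1 : x ^ d < 1 := pow_lt_one₀ hx.1.le hx.2 (by omega)
  exact Real.rpow_lt_one (by linarith) (by linarith) (by positivity)

lemma bfun_anti {d : ℕ} (hd : 2 ≤ d) {x y : ℝ} (hx : x ∈ Set.Ioo (0:ℝ) 1)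
    (hy : y ∈ Set.Ioo (0:ℝ) 1) (hxy : x < y) : bfun d y < bfun d x := by
  have h1 : y ^ d < 1 := pow_lt_one₀ hy.1.le hy.2 (by omega)
  have h2 : x ^ d < y ^ d := pow_lt_pow_left₀ hxy hx.1.le (by omega)
  exact Real.rpow_lt_rpow (by linarith) (by linarith) (by positivity)

lemma Kfun_pos {d : ℕ} (hd : 2 ≤ d) {x : ℝ} (hx : x ∈ Set.Ioo (0:ℝ) 1) :
    0 < Kfun d x := by
  have hb := bfun_pos hd hx
  have : (0:ℝ) < 1 + bfun d x ^ (d - 1) :=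
    add_pos_of_pos_of_nonneg one_pos (pow_nonneg hb.le _)
  exact div_pos (pow_pos hx.1 _) this

lemma Kfun_mono {d : ℕ} (hd : 2 ≤ d) {x y : ℝ} (hx : x ∈ Set.Ioo (0:ℝ) 1)
    (hy : y ∈ Set.Ioo (0:ℝ) 1) (hxy : x < y) : Kfun d x < Kfun d y := by
  have hbx := bfun_pos hd hx
  have hby := bfun_pos hd hy
  have hba : bfun d y < bfun d x := bfun_anti hd hx hy hxy
  have hnum : x ^ (d-1) < y ^ (d-1) := pow_lt_pow_left₀ hxy hx.1.le (by omega)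
  have hden : bfun d y ^ (d-1) < bfun d x ^ (d-1) := pow_lt_pow_left₀ hba hby.le (by omega)
  have h1 : (0:ℝ) < 1 + bfun d y ^ (d-1) :=
    add_pos_of_pos_of_nonneg one_pos (pow_nonneg hby.le _)
  have h2 : (0:ℝ) < 1 + bfun d x ^ (d-1) :=
    add_pos_of_pos_of_nonneg one_pos (pow_nonneg hbx.le _)
  rw [Kfun, Kfun, div_lt_div_iff₀ h2 h1]
  have hx1 : (0:ℝ) ≤ x ^ (d-1) := pow_nonneg hx.1.le _
  nlinarith [pow_pos hy.1 (d-1)]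

lemma T1_eq {d : ℕ} (hd : 2 ≤ d) {x : ℝ} (hx : x ∈ Set.Ioo (0:ℝ) 1) :
    T1 d x = (d - 1 : ℝ) * ((bfun d x + 1) / bfun d x) * Kfun d x ^ (d + 1) := by
  have hb := (bfun_pos hd hx).ne'
  have hK := (Kfun_pos hd hx).ne'
  have hx0 := hx.1.ne'
  have hxd : (x:ℝ) ^ d = x ^ (d - 1) * x := by
    rw [← pow_succ]; congr 1; omega
  have hKd : Kfun d x ^ (d + 1) = Kfun d x ^ d * Kfun d x := pow_succ _ _
  rw [T1, Kderiv, mul_pow, hKd, hxd]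
  field_simp

theorem stmt_9 (d : ℕ) (hd : 2 ≤ d) :
    (∀ a ∈ Set.Ioo (0 : ℝ) 1, 0 < T1 d a) ∧
    StrictMonoOn (T1 d) (Set.Ioo (0 : ℝ) 1) ∧
    Tendsto (fun a => T1 d a / ((d - 1 : ℝ) / bfun d a)) (𝓝[<] (1 : ℝ)) (𝓝 1) ∧
    Tendsto (T1 d) (𝓝[<] (1 : ℝ)) atTop := by
  have hd1 : (0:ℝ) < (d:ℝ) - 1 := by
    have : (2:ℝ) ≤ (d:ℝ) := by exact_mod_cast hd
    linarith
  have hpos : ∀ a ∈ Set.Ioo (0 : ℝ) 1, 0 < T1 d a := by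
    intro a ha
    rw [T1_eq hd ha]
    have hb := bfun_pos hd ha
    have hK := Kfun_pos hd ha
    positivity
  have hmono : StrictMonoOn (T1 d) (Set.Ioo (0 : ℝ) 1) := by
    intro x hx y hy hxy
    rw [T1_eq hd hx, T1_eq hd hy]
    have hbx := bfun_pos hd hx
    have hby := bfun_pos hd hy
    have hKx := Kfun_pos hd hx
    have hba : bfun d y < bfun d x := bfun_anti hd hx hy hxy
    have hKm : Kfun d x < Kfun d y := Kfun_mono hd hx hy hxy
    have h1 : (bfun d x + 1) / bfun d x < (bfun d y + 1) / bfun d y := by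
      rw [div_lt_div_iff₀ hbx hby]
      nlinarith
    have h2 : Kfun d x ^ (d+1) < Kfun d y ^ (d+1) :=
      pow_lt_pow_left₀ hKm hKx.le (by omega)
    have h3 : (bfun d x + 1) / bfun d x * Kfun d x ^ (d+1)
        < (bfun d y + 1) / bfun d y * Kfun d y ^ (d+1) := by
      apply mul_lt_mul'' h1 h2 (by positivity) (by positivity)
    calc (d - 1 : ℝ) * ((bfun d x + 1) / bfun d x) * Kfun d x ^ (d + 1)
        = (d - 1 : ℝ) * ((bfun d x + 1) / bfun d x * Kfun d x ^ (d + 1)) := by ring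
      _ < (d - 1 : ℝ) * ((bfun d y + 1) / bfun d y * Kfun d y ^ (d + 1)) :=
          mul_lt_mul_of_pos_left h3 hd1
      _ = (d - 1 : ℝ) * ((bfun d y + 1) / bfun d y) * Kfun d y ^ (d + 1) := by ring
  have hmem : ∀ᶠ x in 𝓝[<] (1:ℝ), x ∈ Set.Ioo (0:ℝ) 1 :=
    Ioo_mem_nhdsLT_of_mem (by constructor <;> norm_num)
  -- b tends to 0
  have hbt : Tendsto (bfun d) (𝓝[<] (1:ℝ)) (𝓝 0) := by
    have h1 : Tendsto (fun x:ℝ => 1 - x^d) (𝓝[<] (1:ℝ)) (𝓝 0) := by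
      have hc : Continuous (fun x:ℝ => 1 - x^d) := by continuity
      have := (hc.tendsto (1:ℝ)).mono_left (nhdsWithin_le_nhds (s := Set.Iio (1:ℝ)))
      simpa using this
    have h2 : ContinuousAt (fun y:ℝ => y ^ ((d:ℝ)⁻¹)) 0 := by
      apply Real.continuousAt_rpow_const
      right; positivity
    have := h2.tendsto.comp h1
    simp [bfun, Function.comp_def,
      Real.zero_rpow (by positivity : ((d:ℝ)⁻¹) ≠ 0)] at this; exact this
  -- K tends to 1
  have hKt : Tendsto (Kfun d) (𝓝[<] (1:ℝ)) (𝓝 1) := by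
    have hnum : Tendsto (fun x:ℝ => x ^ (d-1)) (𝓝[<] (1:ℝ)) (𝓝 1) := by
      have := ((continuous_pow (d-1)).tendsto (1:ℝ)).mono_left
        (nhdsWithin_le_nhds (s := Set.Iio (1:ℝ)))
      simpa using this
    have hden : Tendsto (fun x:ℝ => 1 + bfun d x ^ (d-1)) (𝓝[<] (1:ℝ)) (𝓝 1) := by
      have : Tendsto (fun x:ℝ => bfun d x ^ (d-1)) (𝓝[<] (1:ℝ)) (𝓝 0) := by
        have := hbt.pow (d-1)
        simpa [zero_pow (by omega : d - 1 ≠ 0)] using this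
      have := this.const_add (1:ℝ)
      simpa using this
    have := hnum.div hden (by norm_num)
    simp only [div_one] at this; exact this
  -- ratio tends to 1
  have hratio : Tendsto (fun a => T1 d a / ((d - 1 : ℝ) / bfun d a))
      (𝓝[<] (1 : ℝ)) (𝓝 1) := by
    have heq : (fun a => (bfun d a + 1) * Kfun d a ^ (d+1)) =ᶠ[𝓝[<] (1:ℝ)]
        (fun a => T1 d a / ((d - 1 : ℝ) / bfun d a)) := by
      filter_upwards [hmem] with a ha
      have hb := (bfun_pos hd ha).ne'
      rw [T1_eq hd ha]
      field_simp
    have h : Tendsto (fun a => (bfun d a + 1) * Kfun d a ^ (d+1))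
        (𝓝[<] (1:ℝ)) (𝓝 1) := by
      have := (hbt.add_const 1).mul (hKt.pow (d+1))
      simpa using this
    exact h.congr' heq
  refine ⟨hpos, hmono, hratio, ?_⟩
  -- T1 tends to atTop
  have hbinv : Tendsto (fun a => (bfun d a)⁻¹) (𝓝[<] (1:ℝ)) atTop := by
    apply Filter.Tendsto.inv_tendsto_nhdsGT_zero
    rw [tendsto_nhdsWithin_iff]
    refine ⟨hbt, ?_⟩
    filter_upwards [hmem] with a ha
    exact bfun_pos hd ha
  have hnum : Tendsto (fun a => (d - 1 : ℝ) * (bfun d a + 1) * Kfun d a ^ (d+1))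
      (𝓝[<] (1:ℝ)) (𝓝 ((d:ℝ) - 1)) := by
    have := (((hbt.add_const 1).const_mul ((d:ℝ)-1)).mul (hKt.pow (d+1)))
    simpa using this
  have := hnum.pos_mul_atTop hd1 hbinv
  apply this.congr'
  filter_upwards [hmem] with a ha
  have hb := (bfun_pos hd ha).ne'
  rw [T1_eq hd ha]
  field_simp
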